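/- Let T be a tree with diameter 4, let x be the (unique) central vertex of T, and let u, v ∈ N_T(x) with deg_T(u) ≥ 2. Then V(T̄) is contained in the convex hull of {ū, v̄, x̄} in the complementary prism TT̄. -/

import Mathlib

open SimpleGraph

/-- Adjacency of the complementary prism: copies of `G` and `Gᶜ` joined by a perfect matching. -/
def prismAdj {V : Type*} (G : SimpleGraph V) : V ⊕ V → V ⊕ V → Prop
  | Sum.inl a, Sum.inl b => G.Adj a b
  | Sum.inr a, Sum.inr b => Gᶜ.Adj a b
  | Sum.inl a, Sum.inr b => a = b
  | Sum.inr a, Sum.inl b => a = b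

/-- The complementary prism `G G̅` of a graph `G`. -/
def compPrism {V : Type*} (G : SimpleGraph V) : SimpleGraph (V ⊕ V) where
  Adj := prismAdj G
  symm := ⟨by
    rintro (a | a) (b | b) h
    · exact h.symm
    · exact h.symm
    · exact h.symm
    · exact h.symm⟩
  loopless := ⟨by
    rintro (a | a) h
    · exact G.loopless.irrefl a h
    · exact Gᶜ.loopless.irrefl a h⟩

/-- `w` lies on some shortest `u,v`-path (geodesic) of `H`. -/
def inInterval {V : Type*} (H : SimpleGraph V) (u v w : V) : Prop :=
  ∃ p : H.Walk u v, p.IsPath ∧ p.length = H.dist u v ∧ w ∈ p.support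

/-- A set of vertices is geodesically convex. -/
def IsGeoConvex {V : Type*} (H : SimpleGraph V) (S : Set V) : Prop :=
  ∀ u ∈ S, ∀ v ∈ S, ∀ w, inInterval H u v w → w ∈ S

/-- The geodesic convex hull: the smallest convex set containing `S`. -/
def geoHull {V : Type*} (H : SimpleGraph V) (S : Set V) : Set V :=
  ⋂₀ {C | IsGeoConvex H C ∧ S ⊆ C}

/-- The convexity number: maximum cardinality of a proper convex set. -/
noncomputable def convexityNumber {V : Type*} (H : SimpleGraph V) : ℕ :=
  sSup {n | ∃ S : Set V, IsGeoConvex H S ∧ S ≠ Set.univ ∧ S.ncard = n}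

/-- The diameter of a graph. -/
noncomputable def graphDiam {V : Type*} (H : SimpleGraph V) : ℕ :=
  sSup {d | ∃ u v : V, H.dist u v = d}

/-- The eccentricity of a vertex. -/
noncomputable def graphEcc {V : Type*} (H : SimpleGraph V) (u : V) : ℕ :=
  sSup {d | ∃ v : V, H.dist u v = d}

/-- The degree of a vertex. -/
noncomputable def vdeg {V : Type*} (H : SimpleGraph V) (v : V) : ℕ :=
  (H.neighborSet v).ncard

/-- The maximum degree. -/
noncomputable def maxDeg {V : Type*} (H : SimpleGraph V) : ℕ :=
  sSup {d | ∃ v : V, vdeg H v = d}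

/-- The number of pendant neighbours of a vertex. -/
noncomputable def pendCount {V : Type*} (H : SimpleGraph V) (w : V) : ℕ :=
  {v ∈ H.neighborSet w | vdeg H v = 1}.ncard

lemma mem_geoHull' {V : Type*} {H : SimpleGraph V} {S : Set V} {a : V} (h : a ∈ S) :
    a ∈ geoHull H S := fun _ hC => hC.2 h

lemma geoHull_closed' {V : Type*} {H : SimpleGraph V} {S : Set V} {a b w : V}
    (ha : a ∈ geoHull H S) (hb : b ∈ geoHull H S) (hw : inInterval H a b w) :
    w ∈ geoHull H S := fun C hC => hC.1 a (ha C hC) b (hb C hC) w hw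

lemma interval_mid' {V : Type*} {H : SimpleGraph V} {a b m : V} (hne : a ≠ b)
    (hab : ¬ H.Adj a b) (h1 : H.Adj a m) (h2 : H.Adj m b) : inInterval H a b m := by
  refine ⟨Walk.cons h1 (Walk.cons h2 Walk.nil), ?_, ?_, by simp⟩
  · simp [Walk.isPath_def, h1.ne, h2.ne, hne]
  · have hle : H.dist a b ≤ 2 := by
      have := SimpleGraph.dist_le (Walk.cons h1 (Walk.cons h2 Walk.nil))
      simpa using this
    have h0 : H.dist a b ≠ 0 := by
      rw [SimpleGraph.dist_ne_zero_iff_ne_and_reachable]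
      exact ⟨hne, ⟨Walk.cons h1 (Walk.cons h2 Walk.nil)⟩⟩
    have h1' : H.dist a b ≠ 1 := fun h => hab (SimpleGraph.dist_eq_one_iff_adj.mp h)
    simp only [Walk.length_cons, Walk.length_nil]
    omega

lemma tree_walk_eq' {V : Type*} {T : SimpleGraph V} (hT : T.IsTree) {a b : V}
    {p q : T.Walk a b} (hp : p.IsPath) (hq : q.IsPath) : p = q :=
  congrArg Subtype.val (hT.IsAcyclic.path_unique ⟨p, hp⟩ ⟨q, hq⟩)

/-- A tree has no triangles. -/
lemma tree_no_tri {V : Type*} {T : SimpleGraph V} (hT : T.IsTree) {a b c : V}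
    (h1 : T.Adj a b) (h2 : T.Adj b c) (h3 : T.Adj a c) : False := by
  by_cases hbc : b = c
  · exact T.loopless.irrefl c (hbc ▸ h2)
  have hab : a ≠ b := h1.ne
  have := tree_walk_eq' hT (p := Walk.cons h3 Walk.nil)
      (q := Walk.cons h1 (Walk.cons h2 Walk.nil))
      (by simp [Walk.isPath_def, h3.ne]) (by simp [Walk.isPath_def, hab, h3.ne, hbc])
  have := congrArg Walk.length this
  simp at this

/-- A tree has no two distinct 2-paths with the same endpoints. -/
lemma tree_no_two {V : Type*} {T : SimpleGraph V} (hT : T.IsTree) {a b b' c : V}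
    (hac : a ≠ c) (hbb : b ≠ b')
    (h1 : T.Adj a b) (h2 : T.Adj b c) (h3 : T.Adj a b') (h4 : T.Adj b' c) : False := by
  have := tree_walk_eq' hT (p := Walk.cons h1 (Walk.cons h2 Walk.nil))
      (q := Walk.cons h3 (Walk.cons h4 Walk.nil))
      (by simp [Walk.isPath_def, h1.ne, hac, h2.ne])
      (by simp [Walk.isPath_def, h3.ne, hac, h4.ne])
  have := congrArg Walk.support this
  simp [Walk.support_cons] at this
  exact hbb this

/-- A tree has no 4-cycle: an edge `a-b` plus a path `a-c-d-b`. -/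
lemma tree_no_quad {V : Type*} {T : SimpleGraph V} (hT : T.IsTree) {a b c d : V}
    (had : a ≠ d) (hcb : c ≠ b)
    (h1 : T.Adj a b) (h2 : T.Adj a c) (h3 : T.Adj c d) (h4 : T.Adj d b) : False := by
  have := tree_walk_eq' hT (p := Walk.cons h1 Walk.nil)
      (q := Walk.cons h2 (Walk.cons h3 (Walk.cons h4 Walk.nil)))
      (by simp [Walk.isPath_def, h1.ne])
      (by simp [Walk.isPath_def, h2.ne, had, h1.ne, h3.ne, hcb, h4.ne])
  have := congrArg Walk.length this
  simp at this

lemma prism_adj_inr {V : Type*} {T : SimpleGraph V} {a b : V} :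
    (compPrism T).Adj (Sum.inr a) (Sum.inr b) ↔ a ≠ b ∧ ¬ T.Adj a b := by
  show Tᶜ.Adj a b ↔ _
  exact compl_adj T a b

/-- If `a,b` are adjacent in `T` and `m` is at `T`-distance at least 2 from both,
then `Sum.inr m` lies on a prism geodesic between `Sum.inr a` and `Sum.inr b`. -/
lemma hull_step {V : Type*} {T : SimpleGraph V} {S : Set (V ⊕ V)} {a b m : V}
    (ha : Sum.inr a ∈ geoHull (compPrism T) S) (hb : Sum.inr b ∈ geoHull (compPrism T) S)
    (hadj : T.Adj a b)
    (h1 : a ≠ m) (h1' : ¬ T.Adj a m) (h2 : m ≠ b) (h2' : ¬ T.Adj m b) :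
    Sum.inr m ∈ geoHull (compPrism T) S := by
  refine geoHull_closed' ha hb (interval_mid' ?_ ?_ ?_ ?_)
  · simpa using hadj.ne
  · rw [prism_adj_inr]
    rintro ⟨-, hn⟩; exact hn hadj
  · exact prism_adj_inr.mpr ⟨h1, h1'⟩
  · exact prism_adj_inr.mpr ⟨h2, h2'⟩

theorem stmt8 {V : Type*} [Fintype V] (T : SimpleGraph V) (hT : T.IsTree)
    (hd : graphDiam T = 4) (x u v : V)
    (hc : ∀ y : V, graphEcc T x ≤ graphEcc T y)
    (hu : T.Adj x u) (hv : T.Adj x v) (hne : u ≠ v) (hdeg : 2 ≤ vdeg T u) :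
    Set.range Sum.inr ⊆ geoHull (compPrism T) {Sum.inr u, Sum.inr v, Sum.inr x} := by
  set S : Set (V ⊕ V) := {Sum.inr u, Sum.inr v, Sum.inr x} with hS
  -- basic hull memberships
  have hu_h : Sum.inr u ∈ geoHull (compPrism T) S := mem_geoHull' (by simp [hS])
  have hv_h : Sum.inr v ∈ geoHull (compPrism T) S := mem_geoHull' (by simp [hS])
  have hx_h : Sum.inr x ∈ geoHull (compPrism T) S := mem_geoHull' (by simp [hS])
  -- `u` has a neighbour `p ≠ x`
  obtain ⟨p, hpu, hpx⟩ : ∃ p, p ∈ T.neighborSet u ∧ p ≠ x :=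
    Set.exists_ne_of_one_lt_ncard hdeg x
  have hup : T.Adj u p := hpu
  -- non-adjacency facts about p
  have hxp : ¬ T.Adj x p := fun h => tree_no_tri hT hu hup h
  have hpv : p ≠ v := fun h => tree_no_tri hT hu (h ▸ hup) hv
  have hpv' : ¬ T.Adj p v := fun h =>
    tree_no_two hT hpx hne (hup.symm) (hu.symm) h (hv.symm)
  have hvp : ¬ T.Adj v p := fun h => hpv' h.symm
  -- p̄ is in the hull: middle of geodesic x̄ – p̄ – v̄
  have hp_h : Sum.inr p ∈ geoHull (compPrism T) S :=
    hull_step hx_h hv_h hv hpx.symm hxp hpv hpv'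
  -- main goal
  rintro _ ⟨w, rfl⟩
  by_cases hwu : w = u
  · exact hwu ▸ hu_h
  by_cases hwv : w = v
  · exact hwv ▸ hv_h
  by_cases hwx : w = x
  · exact hwx ▸ hx_h
  by_cases hxw : T.Adj x w
  · -- w is another neighbour of x: middle of geodesic ū – w̄ – p̄
    have hwu' : ¬ T.Adj u w := fun h => tree_no_tri hT hu.symm hxw h
    have hwp : w ≠ p := fun h => hxp (h ▸ hxw)
    have hwp' : ¬ T.Adj w p := fun h =>
      tree_no_quad hT (fun he => hwu (he : w = u)) hpx.symm h hxw.symm hu hup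
    exact hull_step hu_h hp_h hup (fun h => hwu h.symm) hwu' hwp hwp'
  · by_cases huw : T.Adj u w
    · -- w is a neighbour of u: middle of geodesic x̄ – w̄ – v̄
      have hwv' : ¬ T.Adj w v := fun h =>
        tree_no_two hT (fun he => hwx he) hne huw.symm hu.symm h hv.symm
      exact hull_step hx_h hv_h hv (fun h => hwx h.symm) hxw (fun h => hwv h) hwv'
    · -- w is far from both x and u: middle of geodesic x̄ – w̄ – ū
      exact hull_step hx_h hu_h hu (fun h => hwx h.symm) hxw
        (fun h => hwu h) (fun h => huw h.symm)
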